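/- Burchnall's reduction of F4 on the diagonal: F4(a; b; c1, c2; x, x) = 4F3(a, b, (c1+c2)/2, (c1+c2-1)/2; c1, c2, c1+c2-1; 4x), as an identity of analytic functions of x near 0. -/

import Mathlib

noncomputable def poch (a : ℂ) (n : ℕ) : ℂ := (ascPochhammer ℂ n).eval a

noncomputable def hpg21 (A B C z : ℂ) : ℂ :=
  ∑' n : ℕ, poch A n * poch B n / (poch C n * (n.factorial : ℂ)) * z ^ n

noncomputable def F4 (a b c1 c2 x y : ℂ) : ℂ :=
  ∑' p : ℕ × ℕ, poch a (p.1 + p.2) * poch b (p.1 + p.2) /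
    (poch c1 p.1 * poch c2 p.2 * (p.1.factorial : ℂ) * (p.2.factorial : ℂ)) * x ^ p.1 * y ^ p.2

noncomputable def hpg43 (A1 A2 A3 A4 B1 B2 B3 z : ℂ) : ℂ :=
  ∑' n : ℕ, poch A1 n * poch A2 n * poch A3 n * poch A4 n /
    (poch B1 n * poch B2 n * poch B3 n * (n.factorial : ℂ)) * z ^ n


open Finset

noncomputable def dpoch (x : ℂ) (n : ℕ) : ℂ := (descPochhammer ℂ n).eval x

lemma dpoch_zero (x : ℂ) : dpoch x 0 = 1 := by simp [dpoch]

lemma dpoch_succ (x : ℂ) (n : ℕ) : dpoch x (n + 1) = dpoch x n * (x - n) := by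
  simp [dpoch, descPochhammer_succ_eval]

lemma poch_zero (c : ℂ) : poch c 0 = 1 := by simp [poch]

lemma poch_succ (c : ℂ) (n : ℕ) : poch c (n + 1) = poch c n * (c + n) := by
  simp [poch, ascPochhammer_succ_eval]

lemma poch_add (c : ℂ) (n m : ℕ) : poch c (n + m) = poch c n * poch (c + n) m := by
  have := ascPochhammer_mul (S := ℂ) n m
  have h := congrArg (Polynomial.eval c) this
  simpa [poch, Polynomial.eval_mul, Polynomial.eval_comp] using h.symm

lemma poch_ne_zero {c : ℂ} (hc : ∀ k : ℕ, c ≠ -(k : ℂ)) (n : ℕ) : poch c n ≠ 0 := by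
  induction n with
  | zero => simp [poch_zero]
  | succ n ih =>
    rw [poch_succ]
    refine mul_ne_zero ih ?_
    intro h
    exact hc n (by linear_combination h)

lemma poch_eq_dpoch (c : ℂ) (n : ℕ) : poch c n = dpoch (c + n - 1) n := by
  rw [dpoch, descPochhammer_eval_eq_ascPochhammer]
  congr 1
  ring

lemma dpoch_vandermonde (x y : ℂ) (N : ℕ) :
    ∑ n ∈ range (N + 1), (N.choose n : ℂ) * dpoch x n * dpoch y (N - n)
      = dpoch (x + y) N := by
  induction N with
  | zero => simp [dpoch_zero]
  | succ N ih =>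
    rw [Finset.sum_range_succ' _ (N + 1)]
    have h1 : ∀ n ∈ range (N + 1),
        ((N + 1).choose (n + 1) : ℂ) * dpoch x (n + 1) * dpoch y (N + 1 - (n + 1))
          = (N.choose n : ℂ) * dpoch x n * dpoch y (N - n) * (x - n)
            + (N.choose (n + 1) : ℂ) * dpoch x (n + 1) * dpoch y (N - (n + 1) + 1) := by
      intro n hn
      rw [Nat.choose_succ_succ, Nat.cast_add]
      have h2 : N + 1 - (n + 1) = N - n := by omega
      have hn' : n < N + 1 := mem_range.mp hn
      rw [h2, dpoch_succ]
      by_cases hNn : n = N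
      · subst hNn
        simp [Nat.choose_succ_self]
        ring
      · have h3 : N - (n + 1) + 1 = N - n := by omega
        rw [h3]
        ring
    rw [Finset.sum_congr rfl h1, Finset.sum_add_distrib, add_assoc]
    set g : ℕ → ℂ := fun n => (N.choose n : ℂ) * dpoch x n * dpoch y (N - n + 1) with hg
    have h5 : ∑ n ∈ range (N + 1),
          (N.choose (n + 1) : ℂ) * dpoch x (n + 1) * dpoch y (N - (n + 1) + 1)
          + ((N + 1).choose 0 : ℂ) * dpoch x 0 * dpoch y (N + 1 - 0)
        = ∑ n ∈ range (N + 1), g n := by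
      rw [Finset.sum_range_succ]
      have hB : ∀ n, (N.choose (n + 1) : ℂ) * dpoch x (n + 1) * dpoch y (N - (n + 1) + 1) = g (n + 1) := fun n => rfl
      simp only [hB]
      have hgN : g (N + 1) = 0 := by simp [hg, Nat.choose_succ_self]
      rw [hgN, Finset.sum_range_succ' g N]
      simp [hg, dpoch_zero]
    rw [h5]
    have h6 : ∀ n ∈ range (N + 1),
        (N.choose n : ℂ) * dpoch x n * dpoch y (N - n) * (x - n) + g n
          = (N.choose n : ℂ) * dpoch x n * dpoch y (N - n) * ((x + y) - N) := by
      intro n hn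
      have hn' : n ≤ N := by have := mem_range.mp hn; omega
      have hcast : ((N - n : ℕ) : ℂ) = (N : ℂ) - n := by
        rw [Nat.cast_sub hn']
      have h7 : N - n + 1 = (N - n) + 1 := rfl
      simp only [hg]
      rw [dpoch_succ, hcast]
      ring
    rw [← Finset.sum_add_distrib, Finset.sum_congr rfl h6, ← Finset.sum_mul, ih, dpoch_succ]

lemma key_sum (c1 c2 : ℂ) (N : ℕ) :
    ∑ n ∈ range (N + 1), (N.choose n : ℂ) * poch (c1 + n) (N - n) * poch (c2 + (N - n : ℕ)) n
      = poch (c1 + c2 + N - 1) N := by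
  have h : ∀ n ∈ range (N + 1),
      (N.choose n : ℂ) * poch (c1 + n) (N - n) * poch (c2 + (N - n : ℕ)) n
        = (N.choose n : ℂ) * dpoch (c2 + N - 1) n * dpoch (c1 + N - 1) (N - n) := by
    intro n hn
    have hn' : n ≤ N := by have := mem_range.mp hn; omega
    have hc : ((N - n : ℕ) : ℂ) = (N : ℂ) - n := by rw [Nat.cast_sub hn']
    rw [poch_eq_dpoch (c1 + n), poch_eq_dpoch (c2 + (N - n : ℕ)), hc]
    have e1 : c1 + (n : ℂ) + ((N : ℂ) - n) - 1 = c1 + N - 1 := by ring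
    have e2 : c2 + ((N : ℂ) - n) + n - 1 = c2 + N - 1 := by ring
    rw [e1, e2]
    ring
  rw [Finset.sum_congr rfl h, dpoch_vandermonde, poch_eq_dpoch]
  congr 1
  ring

lemma poch_dup (c : ℂ) (N : ℕ) :
    poch c (2 * N) = 4 ^ N * poch (c / 2) N * poch ((c + 1) / 2) N := by
  induction N with
  | zero => simp [poch_zero]
  | succ N ih =>
    have h : 2 * (N + 1) = (2 * N + 1) + 1 := by omega
    rw [h, poch_succ, poch_succ, ih, poch_succ, poch_succ]
    push_cast
    ring

lemma fact_cast (N n : ℕ) (hn : n ≤ N) :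
    (N.factorial : ℂ) = (N.choose n : ℂ) * n.factorial * (N - n).factorial := by
  rw [← Nat.cast_mul, ← Nat.cast_mul, Nat.choose_mul_factorial_mul_factorial hn]

lemma linear_lower (c : ℂ) (hc : ∀ k : ℕ, c ≠ -(k : ℂ)) :
    ∃ μ : ℝ, 0 < μ ∧ ∀ k : ℕ, μ * (k + 1) ≤ ‖c + k‖ := by
  set K0 : ℕ := ⌈2 * ‖c‖⌉₊ + 1 with hK0
  have hne : (range K0).Nonempty := ⟨0, by simp [hK0]⟩
  set μ0 : ℝ := (range K0).inf' hne (fun k => ‖c + k‖ / (k + 1)) with hμ0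
  have hμ0pos : 0 < μ0 := by
    rw [hμ0, Finset.lt_inf'_iff]
    intro k _
    apply div_pos
    · rw [norm_pos_iff]
      intro h
      exact hc k (by linear_combination h)
    · positivity
  refine ⟨min μ0 (1 / 2), by positivity, fun k => ?_⟩
  by_cases hk : k < K0
  · have h1 : μ0 ≤ ‖c + k‖ / (k + 1) :=
      Finset.inf'_le _ (mem_range.mpr hk)
    have h2 : (0:ℝ) < (k:ℝ) + 1 := by positivity
    calc min μ0 (1 / 2) * (k + 1) ≤ μ0 * (k + 1) := by
          apply mul_le_mul_of_nonneg_right (min_le_left _ _) (le_of_lt h2)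
      _ ≤ ‖c + k‖ / (k + 1) * (k + 1) := mul_le_mul_of_nonneg_right h1 (le_of_lt h2)
      _ = ‖c + k‖ := div_mul_cancel₀ _ (ne_of_gt h2)
  · push_neg at hk
    have hk' : (2 * ‖c‖ + 1 : ℝ) ≤ k := by
      have h3 : (2 * ‖c‖ : ℝ) ≤ ⌈2 * ‖c‖⌉₊ := Nat.le_ceil _
      have h4 : (K0 : ℝ) ≤ k := by exact_mod_cast hk
      rw [hK0] at h4
      push_cast at h4
      linarith
    have h5 : (k : ℝ) - ‖c‖ ≤ ‖c + k‖ := by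
      have := norm_sub_norm_le ((k : ℂ)) (-c)
      simp only [norm_neg, sub_neg_eq_add] at this
      calc (k : ℝ) - ‖c‖ = ‖(k : ℂ)‖ - ‖c‖ := by
            rw [Complex.norm_natCast]
        _ ≤ ‖(k : ℂ) + c‖ := by
            have h8 := norm_sub_norm_le ((k : ℂ) + c) c
            simp only [add_sub_cancel_right] at h8
            linarith
        _ = ‖c + k‖ := by rw [add_comm]
    have h6 : min μ0 (1 / 2) * (k + 1) ≤ (1 / 2) * (k + 1) := by
      apply mul_le_mul_of_nonneg_right (min_le_right _ _) (by positivity)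
    have h7 : (1 / 2 : ℝ) * (k + 1) ≤ (k : ℝ) - ‖c‖ := by linarith
    linarith

lemma poch_norm_lower (c : ℂ) (hc : ∀ k : ℕ, c ≠ -(k : ℂ)) :
    ∃ μ : ℝ, 0 < μ ∧ ∀ n : ℕ, μ ^ n * n.factorial ≤ ‖poch c n‖ := by
  obtain ⟨μ, hμ, hlb⟩ := linear_lower c hc
  refine ⟨μ, hμ, fun n => ?_⟩
  induction n with
  | zero => simp [poch_zero]
  | succ n ih =>
    rw [poch_succ, norm_mul]
    have h1 : μ ^ (n + 1) * ((n + 1).factorial : ℝ)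
        = (μ ^ n * n.factorial) * (μ * (n + 1)) := by
      rw [Nat.factorial_succ]
      push_cast
      ring
    rw [h1]
    exact mul_le_mul ih (hlb n) (by positivity) (norm_nonneg _)

lemma poch_norm_upper (a : ℂ) (n : ℕ) :
    ‖poch a n‖ ≤ (‖a‖ + 1) ^ n * n.factorial := by
  induction n with
  | zero => simp [poch_zero]
  | succ n ih =>
    rw [poch_succ, norm_mul]
    have h2 : ‖a + (n : ℂ)‖ ≤ (‖a‖ + 1) * (n + 1) := by
      calc ‖a + (n : ℂ)‖ ≤ ‖a‖ + ‖(n : ℂ)‖ := norm_add_le _ _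
        _ = ‖a‖ + n := by rw [Complex.norm_natCast]
        _ ≤ (‖a‖ + 1) * (n + 1) := by nlinarith [norm_nonneg a]
    have h1 : (‖a‖ + 1) ^ (n + 1) * ((n + 1).factorial : ℝ)
        = ((‖a‖ + 1) ^ n * n.factorial) * ((‖a‖ + 1) * (n + 1)) := by
      rw [Nat.factorial_succ]; push_cast; ring
    rw [h1]
    exact mul_le_mul ih h2 (norm_nonneg _) (by positivity)

lemma keyN (a b c1 c2 : ℂ) (hc1 : ∀ n : ℕ, c1 ≠ -(n : ℂ))
    (hc2 : ∀ n : ℕ, c2 ≠ -(n : ℂ)) (hc3 : ∀ n : ℕ, c1 + c2 - 1 ≠ -(n : ℂ))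
    (x : ℂ) (N : ℕ) :
    ∑ n ∈ range (N + 1),
        poch a N * poch b N /
          (poch c1 n * poch c2 (N - n) * (n.factorial : ℂ) * ((N - n).factorial : ℂ))
          * x ^ n * x ^ (N - n)
      = poch a N * poch b N * poch ((c1 + c2) / 2) N * poch ((c1 + c2 - 1) / 2) N /
          (poch c1 N * poch c2 N * poch (c1 + c2 - 1) N * (N.factorial : ℂ)) * (4 * x) ^ N := by
  have hP1N : poch c1 N ≠ 0 := poch_ne_zero hc1 N
  have hP2N : poch c2 N ≠ 0 := poch_ne_zero hc2 N
  have hC3N : poch (c1 + c2 - 1) N ≠ 0 := poch_ne_zero hc3 N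
  have hFN : (N.factorial : ℂ) ≠ 0 := Nat.cast_ne_zero.mpr (Nat.factorial_ne_zero N)
  have h1 : ∀ n ∈ range (N + 1),
      poch a N * poch b N /
          (poch c1 n * poch c2 (N - n) * (n.factorial : ℂ) * ((N - n).factorial : ℂ))
          * x ^ n * x ^ (N - n)
        = (N.choose n : ℂ) * poch (c1 + n) (N - n) * poch (c2 + (N - n : ℕ)) n *
            (poch a N * poch b N * x ^ N / (poch c1 N * poch c2 N * (N.factorial : ℂ))) := by
    intro n hn
    have hn' : n ≤ N := by have := mem_range.mp hn; omega
    have hsplit : n + (N - n) = N := by omega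
    have hP1 : poch c1 N = poch c1 n * poch (c1 + n) (N - n) := by
      rw [← hsplit, poch_add]; rw [hsplit]
    have hP2 : poch c2 N = poch c2 (N - n) * poch (c2 + (N - n : ℕ)) n := by
      have hsplit2 : (N - n) + n = N := by omega
      rw [← hsplit2, poch_add]; rw [hsplit2]
    have hx : x ^ n * x ^ (N - n) = x ^ N := by rw [← pow_add, hsplit]
    have hq1 : poch (c1 + n) (N - n) ≠ 0 := by
      intro h; apply hP1N; rw [hP1, h, mul_zero]
    have hq2 : poch (c2 + (N - n : ℕ)) n ≠ 0 := by
      intro h; apply hP2N; rw [hP2, h, mul_zero]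
    have hp1 : poch c1 n ≠ 0 := poch_ne_zero hc1 n
    have hp2 : poch c2 (N - n) ≠ 0 := poch_ne_zero hc2 (N - n)
    have hf1 : (n.factorial : ℂ) ≠ 0 := Nat.cast_ne_zero.mpr (Nat.factorial_ne_zero n)
    have hf2 : ((N - n).factorial : ℂ) ≠ 0 := Nat.cast_ne_zero.mpr (Nat.factorial_ne_zero _)
    have hch : (N.choose n : ℂ) ≠ 0 :=
      Nat.cast_ne_zero.mpr (Nat.choose_pos hn').ne'
    have hcast : ((N - n : ℕ) : ℂ) = (N : ℂ) - n := Nat.cast_sub hn'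
    rw [mul_assoc, hx, hP1, hP2, fact_cast N n hn']
    rw [hcast] at hq2 ⊢
    field_simp
  rw [Finset.sum_congr rfl h1, ← Finset.sum_mul, key_sum]
  have hdup : 4 ^ N * poch ((c1 + c2 - 1) / 2) N * poch ((c1 + c2) / 2) N
      = poch (c1 + c2 - 1) N * poch (c1 + c2 + N - 1) N := by
    have h2 := poch_dup (c1 + c2 - 1) N
    have h3 : (c1 + c2 - 1 + 1) / 2 = (c1 + c2) / 2 := by ring
    have h4 := poch_add (c1 + c2 - 1) N N
    have h5 : c1 + c2 - 1 + (N : ℂ) = c1 + c2 + N - 1 := by ring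
    rw [h3] at h2
    rw [h5] at h4
    rw [← h2, ← h4, two_mul]
  rw [mul_pow]
  field_simp
  linear_combination (- poch a N * poch b N * x ^ N) * hdup

lemma fact_add_le (n m : ℕ) :
    ((n + m).factorial : ℝ) ≤ 2 ^ (n + m) * n.factorial * m.factorial := by
  have h1 : (n + m).factorial = (n + m).choose n * n.factorial * m.factorial := by
    have := Nat.choose_mul_factorial_mul_factorial (Nat.le_add_right n m)
    rw [Nat.add_sub_cancel_left] at this
    omega
  have h2 : (n + m).choose n ≤ 2 ^ (n + m) := by
    calc (n + m).choose n ≤ ∑ i ∈ range (n + m + 1), (n + m).choose i :=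
          Finset.single_le_sum (f := fun i => (n + m).choose i)
            (fun i _ => Nat.zero_le _) (mem_range.mpr (by omega))
      _ = 2 ^ (n + m) := Nat.sum_range_choose (n + m)
  have h3 : (n + m).factorial ≤ 2 ^ (n + m) * n.factorial * m.factorial := by
    rw [h1]
    exact Nat.mul_le_mul_right _ (Nat.mul_le_mul_right _ h2)
  exact_mod_cast h3

lemma F4_summable (a b c1 c2 : ℂ) (hc1 : ∀ n : ℕ, c1 ≠ -(n : ℂ))
    (hc2 : ∀ n : ℕ, c2 ≠ -(n : ℂ)) :
    ∃ ε : ℝ, 0 < ε ∧ ∀ x : ℂ, ‖x‖ < ε →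
      Summable (fun p : ℕ × ℕ => poch a (p.1 + p.2) * poch b (p.1 + p.2) /
        (poch c1 p.1 * poch c2 p.2 * (p.1.factorial : ℂ) * (p.2.factorial : ℂ)) *
        x ^ p.1 * x ^ p.2) := by
  obtain ⟨μ1, hμ1, hl1⟩ := poch_norm_lower c1 hc1
  obtain ⟨μ2, hμ2, hl2⟩ := poch_norm_lower c2 hc2
  set Ka : ℝ := ‖a‖ + 1 with hKa
  set Kb : ℝ := ‖b‖ + 1 with hKb
  have hKa0 : 0 < Ka := by positivity
  have hKb0 : 0 < Kb := by positivity
  set K : ℝ := Ka * Kb with hK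
  have hK0 : 0 < K := by positivity
  refine ⟨min μ1 μ2 / (8 * K), by positivity, fun x hx => ?_⟩
  set r1 : ℝ := 4 * K * ‖x‖ / μ1 with hr1
  set r2 : ℝ := 4 * K * ‖x‖ / μ2 with hr2
  have hr10 : 0 ≤ r1 := by positivity
  have hr20 : 0 ≤ r2 := by positivity
  have hrlt : ∀ μ : ℝ, 0 < μ → min μ1 μ2 ≤ μ → 4 * K * ‖x‖ / μ < 1 := by
    intro μ hμ hmin
    rw [div_lt_one hμ]
    have h1 : 4 * K * ‖x‖ < 4 * K * (min μ1 μ2 / (8 * K)) :=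
      mul_lt_mul_of_pos_left hx (by positivity)
    have he : 4 * K * (min μ1 μ2 / (8 * K)) = min μ1 μ2 / 2 := by
      field_simp
      ring
    have h2 : (0:ℝ) < min μ1 μ2 := lt_min hμ1 hμ2
    rw [he] at h1
    linarith
  have hr11 : r1 < 1 := hrlt μ1 hμ1 (min_le_left _ _)
  have hr21 : r2 < 1 := hrlt μ2 hμ2 (min_le_right _ _)
  have hc1' : r1 * μ1 = 4 * K * ‖x‖ := div_mul_cancel₀ _ (ne_of_gt hμ1)
  have hc2' : r2 * μ2 = 4 * K * ‖x‖ := div_mul_cancel₀ _ (ne_of_gt hμ2)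
  clear_value r1 r2
  have hgsum : Summable (fun p : ℕ × ℕ => r1 ^ p.1 * r2 ^ p.2) :=
    (summable_geometric_of_lt_one hr10 hr11).mul_of_nonneg
      (summable_geometric_of_lt_one hr20 hr21)
      (fun n => pow_nonneg hr10 n) (fun n => pow_nonneg hr20 n)
  apply Summable.of_norm_bounded hgsum
  rintro ⟨n, m⟩
  simp only []
  set N := n + m with hN
  have hp1 : poch c1 n ≠ 0 := poch_ne_zero hc1 n
  have hp2 : poch c2 m ≠ 0 := poch_ne_zero hc2 m
  have hf1 : ((n.factorial : ℂ)) ≠ 0 := Nat.cast_ne_zero.mpr (Nat.factorial_ne_zero n)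
  have hf2 : ((m.factorial : ℂ)) ≠ 0 := Nat.cast_ne_zero.mpr (Nat.factorial_ne_zero m)
  have hD0 : (0:ℝ) < ‖poch c1 n * poch c2 m * (n.factorial : ℂ) * (m.factorial : ℂ)‖ := by
    rw [norm_pos_iff]
    exact mul_ne_zero (mul_ne_zero (mul_ne_zero hp1 hp2) hf1) hf2
  rw [norm_mul, norm_mul, norm_div, norm_pow, norm_pow, div_mul_eq_mul_div,
    div_mul_eq_mul_div, div_le_iff₀ hD0]
  have hDnorm : ‖poch c1 n * poch c2 m * (n.factorial : ℂ) * (m.factorial : ℂ)‖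
      = ‖poch c1 n‖ * ‖poch c2 m‖ * (n.factorial : ℝ) * (m.factorial : ℝ) := by
    rw [norm_mul, norm_mul, norm_mul, Complex.norm_natCast, Complex.norm_natCast]
  rw [hDnorm]
  calc ‖poch a N * poch b N‖ * ‖x‖ ^ n * ‖x‖ ^ m
      = ‖poch a N‖ * ‖poch b N‖ * ‖x‖ ^ N := by
        rw [norm_mul, mul_assoc, ← pow_add]
    _ ≤ (Ka ^ N * N.factorial) * (Kb ^ N * N.factorial) * ‖x‖ ^ N := by
        gcongr ?_ * ?_ * ?_
        · exact poch_norm_upper a N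
        · exact poch_norm_upper b N
    _ ≤ (Ka ^ N * (2 ^ N * n.factorial * m.factorial)) *
          (Kb ^ N * (2 ^ N * n.factorial * m.factorial)) * ‖x‖ ^ N := by
        gcongr <;> exact fact_add_le n m
    _ = (Ka ^ N * Kb ^ N * ((2:ℝ) ^ N * 2 ^ N) * ‖x‖ ^ N) *
          ((n.factorial : ℝ) ^ 2 * (m.factorial : ℝ) ^ 2) := by ring
    _ = (4 * K * ‖x‖) ^ N * ((n.factorial : ℝ) ^ 2 * (m.factorial : ℝ) ^ 2) := by
        rw [show (4 * K * ‖x‖) ^ N = Ka ^ N * Kb ^ N * ((2:ℝ) ^ N * 2 ^ N) * ‖x‖ ^ N by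
          rw [hK, show (4:ℝ) * (Ka * Kb) * ‖x‖ = Ka * (Kb * ((2 * 2) * ‖x‖)) from by ring,
            mul_pow, mul_pow, mul_pow, mul_pow]
          ring]
    _ = (r1 ^ n * r2 ^ m) *
          ((μ1 ^ n * n.factorial) * (μ2 ^ m * m.factorial) *
            (n.factorial : ℝ) * (m.factorial : ℝ)) := by
        rw [hN, pow_add, ← hc1']
        nth_rewrite 2 [hc1']
        rw [← hc2']
        ring
    _ ≤ (r1 ^ n * r2 ^ m) *
          (‖poch c1 n‖ * ‖poch c2 m‖ * (n.factorial : ℝ) * (m.factorial : ℝ)) := by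
        apply mul_le_mul_of_nonneg_left _ (mul_nonneg (pow_nonneg hr10 n) (pow_nonneg hr20 m))
        gcongr ?_ * ?_ * _ * _
        · exact hl1 n
        · exact hl2 m

set_option maxHeartbeats 2000000 in
theorem F4_diagonal_Burchnall (a b c1 c2 : ℂ) (hc1 : ∀ n : ℕ, c1 ≠ -(n : ℂ))
    (hc2 : ∀ n : ℕ, c2 ≠ -(n : ℂ)) (hc3 : ∀ n : ℕ, c1 + c2 - 1 ≠ -(n : ℂ)) :
    ∃ ε > (0 : ℝ), ∀ x : ℂ, ‖x‖ < ε →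
      F4 a b c1 c2 x x =
        hpg43 a b ((c1 + c2) / 2) ((c1 + c2 - 1) / 2) c1 c2 (c1 + c2 - 1) (4 * x) := by
  obtain ⟨ε, hε, hsum⟩ := F4_summable a b c1 c2 hc1 hc2
  refine ⟨ε, hε, fun x hx => ?_⟩
  have hs := hsum x hx
  set f : ℕ × ℕ → ℂ := fun p => poch a (p.1 + p.2) * poch b (p.1 + p.2) /
      (poch c1 p.1 * poch c2 p.2 * (p.1.factorial : ℂ) * (p.2.factorial : ℂ)) *
      x ^ p.1 * x ^ p.2 with hf
  have hstep : ∀ N : ℕ, ∑ kl ∈ antidiagonal N, f kl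
      = poch a N * poch b N * poch ((c1 + c2) / 2) N * poch ((c1 + c2 - 1) / 2) N /
          (poch c1 N * poch c2 N * poch (c1 + c2 - 1) N * (N.factorial : ℂ)) * (4 * x) ^ N := by
    intro N
    rw [Finset.Nat.sum_antidiagonal_eq_sum_range_succ_mk]
    rw [← keyN a b c1 c2 hc1 hc2 hc3 x N]
    apply Finset.sum_congr rfl
    intro n hn
    have hn' : n + (N - n) = N := by
      have := mem_range.mp hn; omega
    simp only [hf, hn']
  show (∑' p : ℕ × ℕ, f p) = _
  rw [hpg43]
  have : ∀ N : ℕ, poch a N * poch b N * poch ((c1 + c2) / 2) N * poch ((c1 + c2 - 1) / 2) N /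
      (poch c1 N * poch c2 N * poch (c1 + c2 - 1) N * (N.factorial : ℂ)) * (4 * x) ^ N
      = ∑ kl ∈ antidiagonal N, f kl := fun N => (hstep N).symm
  rw [tsum_congr this]
  conv_rhs => congr; ext N; rw [← Finset.sum_finset_coe, ← tsum_fintype (L := .unconditional _)]
  rw [← Finset.HasAntidiagonal.sigmaAntidiagonalEquivProd.tsum_eq f]
  exact Summable.tsum_sigma' (fun N => (hasSum_fintype _).summable)
    (Finset.HasAntidiagonal.sigmaAntidiagonalEquivProd.summable_iff.mpr hs)
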